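/- Let J be a category with finite coproducts and finite products, and let n ≥ 1. Then the diagonal functor Δ : J ⥤ ∏_{i : Fin n} J into the n-fold product category, sending an object B to the constant tuple (B, …, B), is a final (cofinal) functor: for every object A = (A_1, …, A_n) of the product category, the comma category (A ↓ Δ) is nonempty and connected. -/

import Mathlib

open CategoryTheory CategoryTheory.Limits

/-- Let `J` be a category with finite coproducts and finite products, and `n ≥ 1`.
Then the diagonal functor `J ⥤ ∏_{i : Fin n} J` into the `n`-fold product category,
sending an object `B` to the constant tuple `(B, …, B)`, is a final (cofinal) functor. -/
theorem diagonal_functor_final {J : Type*} [Category J]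
    [HasFiniteCoproducts J] [HasFiniteProducts J] (n : ℕ) (hn : 1 ≤ n) :
    (Functor.pi' (fun _ : Fin n => 𝟭 J)).Final := by
  constructor
  intro A
  -- the "coproduct" object of the structured arrow category
  let c : StructuredArrow A (Functor.pi' (fun _ : Fin n => 𝟭 J)) :=
    StructuredArrow.mk (Y := ∐ A) (fun i => Sigma.ι A i)
  -- every object receives a morphism from `c`
  have hmap : ∀ j : StructuredArrow A (Functor.pi' (fun _ : Fin n => 𝟭 J)), c ⟶ j := by
    intro j
    refine StructuredArrow.homMk (Sigma.desc (fun i => j.hom i)) ?_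
    funext i
    simp [c]
    exact Sigma.ι_desc (fun i => j.hom i) i
  have : Nonempty (StructuredArrow A (Functor.pi' (fun _ : Fin n => 𝟭 J))) := ⟨c⟩
  apply zigzag_isConnected
  intro j1 j2
  exact Relation.ReflTransGen.trans
    (Relation.ReflTransGen.single (Or.inr ⟨hmap j1⟩))
    (Relation.ReflTransGen.single (Or.inl ⟨hmap j2⟩))
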